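/- Let A : ℂⁿ → ℂⁿ be an invertible linear operator with all eigenvalues of absolute value strictly less than 1. Then the cyclic group ⟨A⟩ acts freely and properly discontinuously on ℂⁿ \ {0}, and the quotient (ℂⁿ \ {0})/⟨A⟩ is a compact Hausdorff space. -/

import Mathlib

open Filter Topology Metric Set ENNReal NNReal

private lemma hopf_coe_pow {n : ℕ} (A : (Fin n → ℂ) ≃L[ℂ] (Fin n → ℂ)) (m : ℕ)
    (u : Fin n → ℂ) :
    (A ^ (m : ℤ)) u = (((A : (Fin n → ℂ) →L[ℂ] (Fin n → ℂ))) ^ m) u := by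
  induction m generalizing u with
  | zero => simp; rfl
  | succ m ih =>
    have h1 : ((m : ℕ) + 1 : ℤ) = (m : ℤ) + 1 := by push_cast; ring
    rw [show ((m + 1 : ℕ) : ℤ) = (m : ℤ) + 1 by push_cast; ring, zpow_add, zpow_one, pow_succ]
    show (A ^ (m : ℤ)) (A u) = _
    rw [ih (A u)]
    rfl

private lemma hopf_norm_le {n : ℕ} (A : (Fin n → ℂ) ≃L[ℂ] (Fin n → ℂ)) (m : ℕ)
    (u : Fin n → ℂ) :
    ‖(A ^ (m : ℤ)) u‖ ≤ ‖((A : (Fin n → ℂ) →L[ℂ] (Fin n → ℂ))) ^ m‖ * ‖u‖ := by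
  rw [hopf_coe_pow]
  exact ContinuousLinearMap.le_opNorm _ u

private lemma hopf_norm_ge {n : ℕ} (A : (Fin n → ℂ) ≃L[ℂ] (Fin n → ℂ)) (m : ℕ)
    (u : Fin n → ℂ) :
    ‖u‖ ≤ ‖((A : (Fin n → ℂ) →L[ℂ] (Fin n → ℂ))) ^ m‖ * ‖(A ^ (-(m : ℤ))) u‖ := by
  have h : (A ^ (m : ℤ)) ((A ^ (-(m : ℤ))) u) = u := by
    rw [zpow_neg]
    exact (A ^ (m : ℤ)).apply_symm_apply u
  calc ‖u‖ = ‖(A ^ (m : ℤ)) ((A ^ (-(m : ℤ))) u)‖ := by rw [h]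
    _ ≤ _ := hopf_norm_le A m _

private lemma hopf_tendsto {n : ℕ} (A : (Fin n → ℂ) ≃L[ℂ] (Fin n → ℂ))
    (hspec : ∀ μ ∈ spectrum ℂ (A : (Fin n → ℂ) →L[ℂ] (Fin n → ℂ)), ‖μ‖ < 1) :
    ∀ ε : ℝ, 0 < ε → ∃ N : ℕ, ∀ m ≥ N,
      ‖((A : (Fin n → ℂ) →L[ℂ] (Fin n → ℂ))) ^ m‖ < ε := by
  set a := (A : (Fin n → ℂ) →L[ℂ] (Fin n → ℂ)) with ha
  have hρ : spectralRadius ℂ a < 1 := by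
    rcases Set.eq_empty_or_nonempty (spectrum ℂ a) with h | h
    · simp [spectralRadius, h]
    · refine spectrum.spectralRadius_lt_of_forall_lt_of_nonempty h (r := 1) ?_
      intro z hz
      have := hspec z hz
      exact_mod_cast this
  obtain ⟨r, hr1, hr2⟩ := ENNReal.lt_iff_exists_nnreal_btwn.mp hρ
  have hgel := spectrum.pow_nnnorm_pow_one_div_tendsto_nhds_spectralRadius a
  have hev : ∀ᶠ m : ℕ in atTop, (‖a ^ m‖₊ : ℝ≥0∞) ^ (1 / (m : ℝ)) < (r : ℝ≥0∞) :=
    hgel.eventually_lt_const hr1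
  have hrlt1 : (r : ℝ) < 1 := by exact_mod_cast hr2
  intro ε hε
  have hpow : Tendsto (fun m : ℕ => (r : ℝ) ^ m) atTop (𝓝 0) :=
    tendsto_pow_atTop_nhds_zero_of_lt_one r.coe_nonneg hrlt1
  have hev2 : ∀ᶠ m : ℕ in atTop, (r : ℝ) ^ m < ε := hpow.eventually_lt_const hε
  have hev3 : ∀ᶠ m : ℕ in atTop, 1 ≤ m := eventually_ge_atTop 1
  obtain ⟨N, hN⟩ := eventually_atTop.mp ((hev.and hev2).and hev3)
  refine ⟨N, fun m hm => ?_⟩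
  obtain ⟨⟨h1, h2⟩, h3⟩ := hN m hm
  have hm0 : (m : ℝ) ≠ 0 := by positivity
  have h4 : (‖a ^ m‖₊ : ℝ≥0∞) < (r : ℝ≥0∞) ^ (m : ℝ) := by
    have h5 := ENNReal.rpow_lt_rpow h1 (show (0 : ℝ) < (m : ℝ) by positivity)
    rwa [← ENNReal.rpow_mul, one_div_mul_cancel hm0, ENNReal.rpow_one] at h5
  rw [ENNReal.rpow_natCast, ← ENNReal.coe_pow, ENNReal.coe_lt_coe] at h4
  have h6 : ‖a ^ m‖ < (r : ℝ) ^ m := by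
    have := (NNReal.coe_lt_coe).mpr h4
    push_cast at this
    simpa using this
  linarith

private lemma hopf_free {n : ℕ} (A : (Fin n → ℂ) ≃L[ℂ] (Fin n → ℂ))
    (htend : ∀ ε : ℝ, 0 < ε → ∃ N : ℕ, ∀ m ≥ N,
      ‖((A : (Fin n → ℂ) →L[ℂ] (Fin n → ℂ))) ^ m‖ < ε) :
    ∀ (k : ℤ) (x : Fin n → ℂ), x ≠ 0 → (A ^ k) x = x → k = 0 := by
  have key : ∀ (k : ℤ) (x : Fin n → ℂ), x ≠ 0 → 0 < k → (A ^ k) x = x → False := by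
    intro k x hx hkpos hfix
    have hxn : 0 < ‖x‖ := norm_pos_iff.mpr hx
    obtain ⟨N, hN⟩ := htend 1 one_pos
    have hiter : ∀ j : ℕ, (A ^ (k * (j : ℤ))) x = x := by
      intro j
      rw [zpow_mul, zpow_natCast]
      induction j with
      | zero => rw [pow_zero]; rfl
      | succ j ih =>
        rw [pow_succ]
        show ((A ^ k) ^ j) ((A ^ k) x) = x
        rw [hfix, ih]
    set m : ℕ := (k * ((N + 1 : ℕ) : ℤ)).toNat with hm
    have hmk : (m : ℤ) = k * ((N + 1 : ℕ) : ℤ) := by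
      rw [hm, Int.toNat_of_nonneg]
      positivity
    have hmN : N ≤ m := by
      have : ((N : ℤ)) ≤ (m : ℤ) := by rw [hmk]; push_cast; nlinarith
      exact_mod_cast this
    have h1 : (A ^ (m : ℤ)) x = x := by rw [hmk]; exact hiter (N + 1)
    have h2 : ‖(A ^ (m : ℤ)) x‖ ≤ ‖((A : (Fin n → ℂ) →L[ℂ] (Fin n → ℂ))) ^ m‖ * ‖x‖ :=
      hopf_norm_le A m x
    rw [h1] at h2
    have h3 := hN m hmN
    nlinarith
  intro k x hx hfix
  rcases lt_trichotomy k 0 with h | h | h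
  · exfalso
    have hfix2 : (A ^ (-k)) x = x := by
      have h2 := congrArg (A ^ (-k)) hfix
      rw [show (A ^ (-k)) ((A ^ k) x) = x by rw [zpow_neg]; exact (A ^ k).symm_apply_apply x]
        at h2
      exact h2.symm
    exact key (-k) x hx (by omega) hfix2
  · exact h
  · exact absurd hfix (fun hf => key k x hx h hf)

private lemma hopf_sep {n : ℕ} (A : (Fin n → ℂ) ≃L[ℂ] (Fin n → ℂ))
    (htend : ∀ ε : ℝ, 0 < ε → ∃ N : ℕ, ∀ m ≥ N,
      ‖((A : (Fin n → ℂ) →L[ℂ] (Fin n → ℂ))) ^ m‖ < ε)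
    (x y : Fin n → ℂ) (hx : x ≠ 0) (hy : y ≠ 0) :
    ∃ δ : ℝ, 0 < δ ∧ ∀ k : ℤ, (A ^ k) x ≠ y →
      ∀ u : Fin n → ℂ, dist u x < δ → ¬ dist ((A ^ k) u) y < δ := by
  set a := (A : (Fin n → ℂ) →L[ℂ] (Fin n → ℂ)) with ha
  have hxn : 0 < ‖x‖ := norm_pos_iff.mpr hx
  have hyn : 0 < ‖y‖ := norm_pos_iff.mpr hy
  set ε₀ : ℝ := min (‖y‖ / (2 * (‖x‖ + 1))) (‖x‖ / (2 * (‖y‖ + 1))) with hε₀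
  have hε₀pos : 0 < ε₀ := lt_min (by positivity) (by positivity)
  obtain ⟨N, hN⟩ := htend ε₀ hε₀pos
  set M : ℤ := (N : ℤ) + 1 with hM
  have hmid : ∀ k : ℤ, ∃ ε : ℝ, 0 < ε ∧ ((A ^ k) x ≠ y →
      ∀ u : Fin n → ℂ, dist u x < ε → ε ≤ dist ((A ^ k) u) y) := by
    intro k
    by_cases hk : (A ^ k) x = y
    · exact ⟨1, one_pos, fun h => absurd hk h⟩
    · set d : ℝ := dist ((A ^ k) x) y with hdd
      have hd : 0 < d := dist_pos.mpr hk
      have hc : ContinuousAt (fun u => (A ^ k) u) x := (A ^ k).continuous.continuousAt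
      rcases Metric.continuousAt_iff.mp hc (d / 2) (by linarith) with ⟨δ', hδ', h'⟩
      refine ⟨min δ' (d / 2), lt_min hδ' (by linarith), fun _ u hu => ?_⟩
      have h1 : dist ((A ^ k) u) ((A ^ k) x) < d / 2 :=
        h' (lt_of_lt_of_le hu (min_le_left _ _))
      have h2 : d ≤ dist ((A ^ k) x) ((A ^ k) u) + dist ((A ^ k) u) y :=
        dist_triangle _ _ _
      rw [dist_comm ((A ^ k) x) ((A ^ k) u)] at h2
      calc min δ' (d / 2) ≤ d / 2 := min_le_right _ _
        _ ≤ dist ((A ^ k) u) y := by linarith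
  choose εf hεf hprop using hmid
  set F : Finset ℤ := Finset.Ioo (-M) M with hF
  have hFne : F.Nonempty := ⟨0, by simp [hF, hM]; omega⟩
  set δ : ℝ := min (min 1 (min (‖x‖ / 2) (‖y‖ / 2))) (F.inf' hFne εf) with hδ
  have hδ1 : δ ≤ 1 := le_trans (min_le_left _ _) (le_trans (min_le_left _ _) le_rfl)
  have hδx : δ ≤ ‖x‖ / 2 :=
    le_trans (min_le_left _ _) (le_trans (min_le_right _ _) (min_le_left _ _))
  have hδy : δ ≤ ‖y‖ / 2 :=
    le_trans (min_le_left _ _) (le_trans (min_le_right _ _) (min_le_right _ _))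
  have hδpos : 0 < δ := by
    refine lt_min (lt_min one_pos (lt_min (by positivity) (by positivity))) ?_
    rw [Finset.lt_inf'_iff]
    exact fun b _ => hεf b
  refine ⟨δ, hδpos, ?_⟩
  intro k hk u hu hcon
  by_cases hk1 : M ≤ k
  · -- large positive k
    set m : ℕ := k.toNat with hm
    have hkm : (m : ℤ) = k := Int.toNat_of_nonneg (by omega)
    have hmN : N ≤ m := by omega
    have h1 : ‖(A ^ k) u‖ ≤ ‖a ^ m‖ * ‖u‖ := by rw [← hkm]; exact hopf_norm_le A m u
    have h2 : ‖a ^ m‖ < ε₀ := hN m hmN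
    have h3 : ‖u‖ < ‖x‖ + 1 := by
      have := norm_sub_norm_le u x
      rw [← dist_eq_norm] at this
      linarith
    have h4 : ‖(A ^ k) u‖ < ε₀ * (‖x‖ + 1) :=
      lt_of_le_of_lt h1 (mul_lt_mul'' h2 h3 (norm_nonneg _) (norm_nonneg _))
    have h5 : ε₀ * (‖x‖ + 1) ≤ ‖y‖ / 2 := by
      have h6 : ε₀ ≤ ‖y‖ / (2 * (‖x‖ + 1)) := min_le_left _ _
      have h6' : ε₀ * (2 * (‖x‖ + 1)) ≤ ‖y‖ := (le_div_iff₀ (by positivity)).mp h6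
      linarith
    have h7 : ‖y‖ - ‖(A ^ k) u‖ ≤ dist ((A ^ k) u) y := by
      rw [dist_eq_norm, ← norm_neg ((A ^ k) u - y), neg_sub]
      exact norm_sub_norm_le y ((A ^ k) u)
    linarith
  by_cases hk2 : k ≤ -M
  · -- large negative k
    set m : ℕ := (-k).toNat with hm
    have hkm : -(m : ℤ) = k := by omega
    have hmN : N ≤ m := by omega
    have h1 : ‖u‖ ≤ ‖a ^ m‖ * ‖(A ^ k) u‖ := by rw [← hkm]; exact hopf_norm_ge A m u
    have h2 : ‖a ^ m‖ < ε₀ := hN m hmN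
    have h3 : ‖(A ^ k) u‖ < ‖y‖ + 1 := by
      have := norm_sub_norm_le ((A ^ k) u) y
      rw [← dist_eq_norm] at this
      linarith
    have h4 : ‖x‖ / 2 ≤ ‖u‖ := by
      have := norm_sub_norm_le x u
      rw [← dist_eq_norm, dist_comm] at this
      linarith
    have h5 : ε₀ ≤ ‖x‖ / (2 * (‖y‖ + 1)) := min_le_right _ _
    have h6 : ‖a ^ m‖ * ‖(A ^ k) u‖ < ε₀ * (‖y‖ + 1) :=
      mul_lt_mul'' h2 h3 (norm_nonneg _) (norm_nonneg _)
    have h5' : ε₀ * (2 * (‖y‖ + 1)) ≤ ‖x‖ := (le_div_iff₀ (by positivity)).mp h5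
    linarith
  · -- middle range
    have hkF : k ∈ F := by simp [hF, hM]; omega
    have hδk : δ ≤ εf k := le_trans (min_le_right _ _) (Finset.inf'_le εf hkF)
    have := hprop k hk u (lt_of_lt_of_le hu hδk)
    linarith

/-- The relation identifying points of `ℂⁿ \ {0}` in one orbit of the cyclic group
generated by an invertible linear operator `A`. -/
def hopfSetoid {n : ℕ} (A : (Fin n → ℂ) ≃L[ℂ] (Fin n → ℂ)) :
    Setoid {x : Fin n → ℂ // x ≠ 0} where
  r x y := ∃ k : ℤ, (A ^ k) x.1 = y.1
  iseqv := by
    constructor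
    · intro x; exact ⟨0, by rw [zpow_zero]; rfl⟩
    · rintro x y ⟨k, hk⟩
      exact ⟨-k, by rw [← hk, zpow_neg]; exact (A ^ k).symm_apply_apply x.1⟩
    · rintro x y w ⟨k, hk⟩ ⟨l, hl⟩
      exact ⟨l + k, by rw [← hl, ← hk, zpow_add]; rfl⟩

private lemma hopf_open_sat {n : ℕ} (A : (Fin n → ℂ) ≃L[ℂ] (Fin n → ℂ))
    (x : Fin n → ℂ) (δ : ℝ) :
    IsOpen (Quotient.mk (hopfSetoid A) '' (Subtype.val ⁻¹' ball x δ)) := by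
  rw [← (isQuotientMap_quotient_mk' (s := hopfSetoid A)).isOpen_preimage]
  show IsOpen (Quot.mk (hopfSetoid A).r ⁻¹' _)
  have heq : Quot.mk (hopfSetoid A).r ⁻¹'
      (Quotient.mk (hopfSetoid A) '' (Subtype.val ⁻¹' ball x δ)) =
      ⋃ k : ℤ, (fun p : {x : Fin n → ℂ // x ≠ 0} => (A ^ k) p.1) ⁻¹' (ball x δ) := by
    ext p
    simp only [mem_preimage, mem_image, mem_iUnion]
    constructor
    · rintro ⟨s, hs, hqs⟩
      obtain ⟨k, hk⟩ := Quotient.exact hqs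
      refine ⟨-k, ?_⟩
      have h2 : (A ^ (-k)) p.1 = s.1 := by
        rw [← hk, zpow_neg]
        exact (A ^ k).symm_apply_apply s.1
      show (A ^ (-k)) p.1 ∈ ball x δ
      rw [h2]
      exact hs
    · rintro ⟨k, hk⟩
      have hne : (A ^ k) p.1 ≠ 0 := by
        intro h
        apply p.2
        have := congrArg (A ^ (-k)) h
        rw [show (A ^ (-k)) ((A ^ k) p.1) = p.1 by
          rw [zpow_neg]; exact (A ^ k).symm_apply_apply p.1, map_zero] at this
        exact this
      refine ⟨⟨(A ^ k) p.1, hne⟩, hk, ?_⟩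
      exact Quot.sound ⟨-k, by rw [zpow_neg]; exact (A ^ k).symm_apply_apply p.1⟩
  refine (congrArg IsOpen heq).mpr ?_
  exact isOpen_iUnion fun k =>
    (((A ^ k).continuous).comp continuous_subtype_val).isOpen_preimage _ isOpen_ball

private lemma hopf_compact {n : ℕ} (A : (Fin n → ℂ) ≃L[ℂ] (Fin n → ℂ))
    (htend : ∀ ε : ℝ, 0 < ε → ∃ N : ℕ, ∀ m ≥ N,
      ‖((A : (Fin n → ℂ) →L[ℂ] (Fin n → ℂ))) ^ m‖ < ε) :
    CompactSpace (Quotient (hopfSetoid A)) := by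
  set a' := (A.symm : (Fin n → ℂ) →L[ℂ] (Fin n → ℂ)) with ha'
  set c : ℝ := 1 / ‖a'‖ with hc
  set K : Set (Fin n → ℂ) := {y | ‖y‖ ≤ 1} ∩ {y | c ≤ ‖y‖} with hK
  have hKsub : K ⊆ closedBall 0 1 := by
    intro y hy
    rw [mem_closedBall_zero_iff]
    exact hy.1
  have hKcl : IsClosed K :=
    (isClosed_le continuous_norm continuous_const).inter
      (isClosed_le continuous_const continuous_norm)
  have hKcompact : IsCompact K :=
    (isCompact_closedBall (0 : Fin n → ℂ) 1).of_isClosed_subset hKcl hKsub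
  set Kt : Set {x : Fin n → ℂ // x ≠ 0} := Subtype.val ⁻¹' K with hKt
  have hKtc : IsCompact Kt := by
    rw [Topology.IsEmbedding.isCompact_iff Topology.IsEmbedding.subtypeVal]
    have himg : Subtype.val '' Kt = K ∩ {x : Fin n → ℂ | x ≠ 0} := by
      rw [hKt, Set.image_preimage_eq_inter_range, Subtype.range_val_subtype]
    rw [himg]
    rcases subsingleton_or_nontrivial (Fin n → ℂ) with hsub | hnt
    · have : {x : Fin n → ℂ | x ≠ 0} = ∅ := by
        ext z
        simp [Subsingleton.elim z 0]
      rw [this, Set.inter_empty]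
      exact isCompact_empty
    · have ha'pos : 0 < ‖a'‖ := by
        rw [norm_pos_iff]
        intro h
        obtain ⟨z, hz⟩ := exists_ne (0 : Fin n → ℂ)
        have : a' z = 0 := by rw [h]; rfl
        rw [ha'] at this
        exact hz (by simpa using (A.symm.map_eq_zero_iff).mp this)
      have : K ∩ {x : Fin n → ℂ | x ≠ 0} = K := by
        rw [Set.inter_eq_left]
        intro y hy
        have : (0 : ℝ) < c := by positivity
        have hyn : 0 < ‖y‖ := lt_of_lt_of_le this hy.2
        exact norm_pos_iff.mp hyn
      rw [this]
      exact hKcompact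
  constructor
  have huniv : (Set.univ : Set (Quotient (hopfSetoid A))) =
      Quotient.mk (hopfSetoid A) '' Kt := by
    refine Set.eq_of_subset_of_subset ?_ (Set.subset_univ _)
    intro q _
    induction q using Quotient.ind with
    | _ p =>
      obtain ⟨x, hx⟩ := p
      have hxn : 0 < ‖x‖ := norm_pos_iff.mpr hx
      set P : ℤ → Prop := fun k => ‖(A ^ k) x‖ ≤ 1 with hP
      have Hinh : ∃ z : ℤ, P z := by
        obtain ⟨N, hN⟩ := htend (1 / ‖x‖) (by positivity)
        refine ⟨(N : ℤ), ?_⟩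
        have h1 := hopf_norm_le A N x
        have h2 := hN N le_rfl
        have h3 : ‖(A ^ (N : ℤ)) x‖ < (1 / ‖x‖) * ‖x‖ := by
          refine lt_of_le_of_lt h1 ?_
          exact mul_lt_mul_of_pos_right h2 hxn
        rw [one_div, inv_mul_cancel₀ (ne_of_gt hxn)] at h3
        exact le_of_lt h3
      have Hbdd : ∃ b : ℤ, ∀ z : ℤ, P z → b ≤ z := by
        obtain ⟨N, hN⟩ := htend ‖x‖ hxn
        refine ⟨-(N : ℤ) + 1, fun z hz => ?_⟩
        by_contra hcon
        push_neg at hcon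
        have hzN : z ≤ -(N : ℤ) := by omega
        set m : ℕ := (-z).toNat with hm
        have hzm : -(m : ℤ) = z := by omega
        have hmN : N ≤ m := by omega
        have h1 : ‖x‖ ≤ ‖((A : (Fin n → ℂ) →L[ℂ] (Fin n → ℂ))) ^ m‖ * ‖(A ^ z) x‖ := by
          rw [← hzm]; exact hopf_norm_ge A m x
        have h2 := hN m hmN
        have h3 : ‖((A : (Fin n → ℂ) →L[ℂ] (Fin n → ℂ))) ^ m‖ * ‖(A ^ z) x‖ ≤
            ‖((A : (Fin n → ℂ) →L[ℂ] (Fin n → ℂ))) ^ m‖ * 1 :=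
          mul_le_mul_of_nonneg_left hz (norm_nonneg _)
        rw [mul_one] at h3
        linarith
      obtain ⟨k₀, hk₀P, hk₀min⟩ := Int.exists_least_of_bdd Hbdd Hinh
      have hnotP : ¬ P (k₀ - 1) := fun h => by have := hk₀min _ h; omega
      have hgt1 : 1 < ‖(A ^ (k₀ - 1)) x‖ := by
        rw [hP] at hnotP
        exact not_le.mp hnotP
      have hstep : ‖(A ^ (k₀ - 1)) x‖ ≤ ‖a'‖ * ‖(A ^ k₀) x‖ := by
        have heq : (A ^ (k₀ - 1)) x = A.symm ((A ^ k₀) x) := by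
          have h9 : (A ^ (k₀ - 1)) x = (A ^ ((-1 : ℤ) + k₀)) x := by
            rw [show (-1 : ℤ) + k₀ = k₀ - 1 by ring]
          rw [h9, zpow_add]
          show (A ^ (-1 : ℤ)) ((A ^ k₀) x) = _
          rw [zpow_neg, zpow_one]
          rfl
        rw [heq]
        exact ContinuousLinearMap.le_opNorm a' _
      have ha'pos : 0 < ‖a'‖ := by
        by_contra h
        push_neg at h
        nlinarith [norm_nonneg ((A ^ k₀) x), mul_nonpos_of_nonpos_of_nonneg h
          (norm_nonneg ((A ^ k₀) x))]
      have hlow : c ≤ ‖(A ^ k₀) x‖ := by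
        rw [hc, div_le_iff₀ ha'pos]
        nlinarith
      have hne0 : (A ^ k₀) x ≠ 0 := by
        intro h
        rw [h] at hlow
        simp only [norm_zero] at hlow
        have : (0 : ℝ) < c := by positivity
        linarith
      have hrel : (hopfSetoid A).r ⟨(A ^ k₀) x, hne0⟩ ⟨x, hx⟩ :=
        ⟨-k₀, by rw [zpow_neg]; exact (A ^ k₀).symm_apply_apply x⟩
      exact ⟨⟨(A ^ k₀) x, hne0⟩, ⟨hk₀P, hlow⟩, Quot.sound hrel⟩
  rw [huniv]
  exact hKtc.image continuous_quot_mk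

set_option maxHeartbeats 1000000 in
private lemma hopf_t2 {n : ℕ} (A : (Fin n → ℂ) ≃L[ℂ] (Fin n → ℂ))
    (htend : ∀ ε : ℝ, 0 < ε → ∃ N : ℕ, ∀ m ≥ N,
      ‖((A : (Fin n → ℂ) →L[ℂ] (Fin n → ℂ))) ^ m‖ < ε) :
    T2Space (Quotient (hopfSetoid A)) := by
  constructor
  intro q₁ q₂ hne
  induction q₁ using Quotient.ind with | _ p =>
  induction q₂ using Quotient.ind with | _ r =>
  obtain ⟨x, hx⟩ := p
  obtain ⟨y, hy⟩ := r
  have hxy : ∀ k : ℤ, (A ^ k) x ≠ y := by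
    intro k hk
    exact hne (Quot.sound ⟨k, hk⟩)
  obtain ⟨δ, hδpos, hsep⟩ := hopf_sep A htend x y hx hy
  refine ⟨Quotient.mk (hopfSetoid A) '' (Subtype.val ⁻¹' ball x δ),
    Quotient.mk (hopfSetoid A) '' (Subtype.val ⁻¹' ball y δ),
    hopf_open_sat A x δ, hopf_open_sat A y δ, ?_, ?_, ?_⟩
  · refine Set.mem_image_of_mem _ ?_
    show dist x x < δ
    simpa using hδpos
  · refine Set.mem_image_of_mem _ ?_
    show dist y y < δ
    simpa using hδpos
  rw [Set.disjoint_left]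
  rintro q ⟨s, hs, hqs⟩ ⟨t, ht, hqt⟩
  have hst : Quotient.mk (hopfSetoid A) s = Quotient.mk (hopfSetoid A) t := by
    rw [hqs, hqt]
  obtain ⟨k, hk⟩ := Quotient.exact hst
  exact hsep k (hxy k) s.1 (mem_ball.mp hs) (by rw [hk]; exact mem_ball.mp ht)

/-- `⟨A⟩` acts freely and properly discontinuously on `ℂⁿ \ {0}`, and the quotient
(the linear Hopf manifold) is compact Hausdorff. -/
theorem stmt9 {n : ℕ} (A : (Fin n → ℂ) ≃L[ℂ] (Fin n → ℂ))
    (hspec : ∀ μ ∈ spectrum ℂ (A : (Fin n → ℂ) →L[ℂ] (Fin n → ℂ)), ‖μ‖ < 1) :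
    (∀ (k : ℤ) (x : Fin n → ℂ), x ≠ 0 → (A ^ k) x = x → k = 0) ∧
    (∀ x : Fin n → ℂ, x ≠ 0 → ∃ U ∈ nhds x,
      ∀ k : ℤ, k ≠ 0 → Disjoint ((A ^ k) '' U) U) ∧
    CompactSpace (Quotient (hopfSetoid A)) ∧ T2Space (Quotient (hopfSetoid A)) := by
  have htend := hopf_tendsto A hspec
  have hfree := hopf_free A htend
  refine ⟨hfree, ?_, hopf_compact A htend, hopf_t2 A htend⟩
  intro x hx
  obtain ⟨δ, hδpos, hsep⟩ := hopf_sep A htend x x hx hx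
  refine ⟨Metric.ball x δ, Metric.ball_mem_nhds x hδpos, ?_⟩
  intro k hk
  rw [Set.disjoint_left]
  rintro z ⟨u, hu, rfl⟩ hz
  exact hsep k (fun hfix => hk (hfree k x hx hfix)) u (Metric.mem_ball.mp hu)
    (Metric.mem_ball.mp hz)
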